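/- Suppose V has finite dimension exactly n over K, where n ≥ 2, and f is an alternating n-linear form on V. Then the following are equivalent: (a) f is non-degenerate; (b) f is a perfect pairing, i.e., both Ψ : ⋀^{n-1} V → V* and Φ : V → (⋀^{n-1} V)* are linear isomorphisms; (c) f is generic. -/

import Mathlib

variable {K : Type*} [Field K] {V : Type*} [AddCommGroup V] [Module K V]

/-- The pure wedge `v₁ ∧ ⋯ ∧ v_m` as an element of the `m`-th exterior power. -/
noncomputable def wedge (m : ℕ) (v : Fin m → V) : ⋀[K]^m V :=
  ⟨ExteriorAlgebra.ιMulti K m v, ExteriorAlgebra.ιMulti_range K m (Set.mem_range_self v)⟩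

/-- `B` is the bilinear pairing `⋀^m V × V → K` induced by the alternating
`(m+1)`-linear form `f`, determined on pure wedges by
`⟨v₁ ∧ ⋯ ∧ v_m, w⟩₂ = f (v₁, …, v_m, w)`. -/
def IsInducedPairing (m : ℕ) (f : V [⋀^Fin (m+1)]→ₗ[K] K)
    (B : ⋀[K]^m V →ₗ[K] V →ₗ[K] K) : Prop :=
  ∀ (v : Fin m → V) (w : V), B (wedge m v) w = f (Fin.snoc v w)

/-- The form is non-degenerate. -/
def PairNondegenerate (m : ℕ) (B : ⋀[K]^m V →ₗ[K] V →ₗ[K] K) : Prop :=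
  ∀ t : ⋀[K]^m V, t ≠ 0 → ∃ w : V, B t w ≠ 0

/-- The form is generic: every finite linearly independent family in `⋀^m V` can be
sent to any prescribed tuple of scalars by pairing with a single vector `w ∈ V`. -/
def PairGeneric (m : ℕ) (B : ⋀[K]^m V →ₗ[K] V →ₗ[K] K) : Prop :=
  ∀ (l : ℕ) (t : Fin l → ⋀[K]^m V), LinearIndependent K t →
    ∀ k : Fin l → K, ∃ w : V, ∀ i, B (t i) w = k i

/-!
Statement 10: Suppose `V` has finite dimension exactly `n = m + 1 ≥ 2` over `K`
and `f` is an alternating `n`-linear form on `V` with induced pairing `B`. Then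
the following are equivalent: (a) `f` is non-degenerate; (b) `f` is a perfect
pairing, i.e. both `Ψ = B : ⋀^m V → V*` and `Φ = B.flip : V → (⋀^m V)*` are
linear isomorphisms (bijective); (c) `f` is generic.
-/

noncomputable def liftForm (m : ℕ) (g : V [⋀^Fin m]→ₗ[K] K) : ⋀[K]^m V →ₗ[K] K :=
  (ExteriorAlgebra.liftAlternating
    (Function.update (0 : ∀ i, V [⋀^Fin i]→ₗ[K] K) m g)) ∘ₗ (⋀[K]^m V).subtype

lemma liftForm_wedge (m : ℕ) (g : V [⋀^Fin m]→ₗ[K] K) (v : Fin m → V) :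
    liftForm m g (wedge m v) = g v := by
  simp [liftForm, wedge]

lemma wedge_castSucc_ne_zero (m : ℕ) (e : Module.Basis (Fin (m+1)) K V) :
    wedge m (e ∘ Fin.castSucc) ≠ (0 : ⋀[K]^m V) := by
  intro h
  set π : V →ₗ[K] (Fin m → K) := LinearMap.pi fun j => e.coord (Fin.castSucc j)
  set g : V [⋀^Fin m]→ₗ[K] K := Matrix.detRowAlternating.compLinearMap π
  have h1 : g (e ∘ Fin.castSucc) = 1 := by
    show Matrix.detRowAlternating (π ∘ (e ∘ Fin.castSucc)) = 1
    have : π ∘ (e ∘ Fin.castSucc) = fun i j => if i = j then (1:K) else 0 := by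
      funext i j
      simp [π, Module.Basis.coord_apply, Module.Basis.repr_self, Finsupp.single_apply, Fin.castSucc_inj, eq_comm]
    rw [this]
    have h2 : Matrix.of (fun i j => if i = j then (1:K) else 0) = (1 : Matrix (Fin m) (Fin m) K) := by
      ext i j; simp [Matrix.one_apply]
    show Matrix.det (Matrix.of fun i j => if i = j then (1:K) else 0) = 1
    rw [h2, Matrix.det_one]
  have := liftForm_wedge m g (e ∘ Fin.castSucc)
  rw [h, map_zero] at this
  rw [h1] at this
  exact one_ne_zero this.symm

lemma coord_mem_range (m : ℕ) (e : Module.Basis (Fin (m+1)) K V)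
    (f : V [⋀^Fin (m+1)]→ₗ[K] K) (B : ⋀[K]^m V →ₗ[K] V →ₗ[K] K)
    (hB : ∀ (v : Fin m → V) (w : V), B (wedge m v) w = f (Fin.snoc v w))
    (hc : f e ≠ 0) (j : Fin (m+1)) :
    (e.coord j : V →ₗ[K] K) ∈ LinearMap.range B := by
  classical
  set F : Fin (m+1) → Fin (m+1) := Fin.snoc (j.succAbove) j with hF
  have hFinj : Function.Injective F := by
    intro a b hab
    induction a using Fin.lastCases with
    | last =>
      induction b using Fin.lastCases with
      | last => rfl
      | cast b =>
        simp only [F, Fin.snoc_last, Fin.snoc_castSucc] at hab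
        exact absurd hab.symm (Fin.succAbove_ne j b)
    | cast a =>
      induction b using Fin.lastCases with
      | last =>
        simp only [F, Fin.snoc_last, Fin.snoc_castSucc] at hab
        exact absurd hab (Fin.succAbove_ne j a)
      | cast b =>
        simp only [F, Fin.snoc_castSucc] at hab
        rw [Fin.succAbove_right_injective hab]
  set σ : Equiv.Perm (Fin (m+1)) := Equiv.ofBijective F (Finite.injective_iff_bijective.mp hFinj)
  set s : K := ((Equiv.Perm.sign σ : ℤ) : K) with hs
  have hsne : s ≠ 0 := by
    rcases Int.units_eq_one_or (Equiv.Perm.sign σ) with h | h <;> rw [hs, h] <;> norm_num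
  have key : B (wedge m (e ∘ j.succAbove)) = (f e * s) • (e.coord j : V →ₗ[K] K) := by
    apply e.ext
    intro k
    rw [LinearMap.smul_apply, hB]
    rw [f.eq_smul_basis_det e]
    rw [AlternatingMap.smul_apply]
    by_cases hkj : k = j
    · subst hkj
      have hcomp : Fin.snoc (e ∘ k.succAbove) (e k) = e ∘ σ := by
        have : e ∘ F = Fin.snoc (e ∘ k.succAbove) (e k) := by
          rw [hF, Fin.comp_snoc]
        rw [← this]; rfl
      rw [hcomp, AlternatingMap.map_perm, Module.Basis.det_self]
      simp [hs, Units.smul_def, zsmul_eq_mul, mul_comm, Module.Basis.det_self]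
    · obtain ⟨i, hi⟩ := Fin.exists_succAbove_eq hkj
      have hdet : e.det (Fin.snoc (e ∘ j.succAbove) (e k)) = 0 := by
        apply AlternatingMap.map_eq_zero_of_eq _ _ (i := Fin.castSucc i) (j := Fin.last m)
        · rw [Fin.snoc_castSucc, Fin.snoc_last, Function.comp_apply, hi]
        · exact Fin.ne_of_lt (Fin.castSucc_lt_last i)
      rw [hdet, smul_zero]
      rw [Module.Basis.coord_apply, Module.Basis.repr_self, Finsupp.single_apply, if_neg hkj]
      rw [smul_zero]
  refine ⟨(f e * s)⁻¹ • wedge m (e ∘ j.succAbove), ?_⟩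
  rw [map_smul, key, smul_smul, inv_mul_cancel₀ (mul_ne_zero hc hsne), one_smul]

theorem statement10_aux (m : ℕ) (hm : 1 ≤ m) [FiniteDimensional K V]
    (hdim : Module.finrank K V = m + 1)
    (f : V [⋀^Fin (m+1)]→ₗ[K] K) (B : ⋀[K]^m V →ₗ[K] V →ₗ[K] K)
    (hB : ∀ (v : Fin m → V) (w : V), B (wedge m v) w = f (Fin.snoc v w)) :
    List.TFAE
      [ (∀ t : ⋀[K]^m V, t ≠ 0 → ∃ w : V, B t w ≠ 0),
        Function.Bijective B ∧ Function.Bijective B.flip,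
        (∀ (l : ℕ) (t : Fin l → ⋀[K]^m V), LinearIndependent K t →
          ∀ k : Fin l → K, ∃ w : V, ∀ i, B (t i) w = k i) ] := by
  classical
  obtain ⟨e⟩ : Nonempty (Module.Basis (Fin (m+1)) K V) := ⟨Module.finBasisOfFinrankEq K V hdim⟩
  tfae_have 3 → 1 := by
    intro hg t ht
    obtain ⟨w, hw⟩ := hg 1 (fun _ => t) (LinearIndependent.of_subsingleton 0 ht) (fun _ => 1)
    exact ⟨w, by rw [hw 0]; exact one_ne_zero⟩
  tfae_have 1 → 2 := by
    intro hnd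
    have hc : f e ≠ 0 := by
      intro h0
      obtain ⟨w, hw⟩ := hnd _ (wedge_castSucc_ne_zero m e)
      apply hw
      rw [hB, f.eq_smul_basis_det e, AlternatingMap.smul_apply, h0, zero_smul]
    have hBinj : Function.Injective B := by
      rw [← LinearMap.ker_eq_bot, LinearMap.ker_eq_bot']
      intro t ht
      by_contra h
      obtain ⟨w, hw⟩ := hnd t h
      rw [ht] at hw
      exact hw rfl
    have hBsurj : Function.Surjective B := by
      rw [← LinearMap.range_eq_top, ← top_le_iff, ← e.dualBasis.span_eq, Submodule.span_le]
      rintro _ ⟨j, rfl⟩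
      rw [Module.Basis.coe_dualBasis]
      exact coord_mem_range m e f B hB hc j
    have hbij : Function.Bijective B := ⟨hBinj, hBsurj⟩
    have hfd : FiniteDimensional K (⋀[K]^m V) :=
      LinearEquiv.finiteDimensional (LinearEquiv.ofBijective B hbij).symm
    have hflipinj : Function.Injective B.flip := by
      rw [← LinearMap.ker_eq_bot, LinearMap.ker_eq_bot']
      intro w hw
      rw [← Module.forall_dual_apply_eq_zero_iff K w]
      intro φ
      obtain ⟨t, rfl⟩ := hBsurj φ
      exact LinearMap.congr_fun hw t
    have hr : Module.finrank K V = Module.finrank K (Module.Dual K (⋀[K]^m V)) := by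
      rw [Subspace.dual_finrank_eq, (LinearEquiv.ofBijective B hbij).finrank_eq]
      exact (Subspace.dual_finrank_eq (K := K) (V := V)).symm
    exact ⟨hbij, hflipinj,
      (LinearMap.injective_iff_surjective_of_finrank_eq_finrank hr).mp hflipinj⟩
  tfae_have 2 → 3 := by
    rintro ⟨-, -, hflipsurj⟩ l t hli k
    set p := Submodule.span K (Set.range t)
    set ψ₀ : p →ₗ[K] K := (Finsupp.linearCombination K k) ∘ₗ hli.repr with hψ₀
    obtain ⟨ψ, hψ⟩ := LinearMap.exists_extend ψ₀
    obtain ⟨w, hw⟩ := hflipsurj ψ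
    refine ⟨w, fun i => ?_⟩
    set x : p := ⟨t i, Submodule.subset_span (Set.mem_range_self i)⟩ with hxdef
    have h1 : B (t i) w = ψ (t i) := by rw [← hw]; rfl
    have h2 : ψ (t i) = ψ₀ x := LinearMap.congr_fun hψ x
    have h3 : hli.repr x = Finsupp.single i 1 := hli.repr_eq_single i x rfl
    rw [h1, h2, hψ₀, LinearMap.comp_apply, h3, Finsupp.linearCombination_single, one_smul]
  tfae_finish

theorem statement10 (m : ℕ) (hm : 1 ≤ m) [FiniteDimensional K V]
    (hdim : Module.finrank K V = m + 1)
    (f : V [⋀^Fin (m+1)]→ₗ[K] K) (B : ⋀[K]^m V →ₗ[K] V →ₗ[K] K)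
    (hB : IsInducedPairing m f B) :
    List.TFAE
      [ PairNondegenerate m B,
        Function.Bijective B ∧ Function.Bijective B.flip,
        PairGeneric m B ] := by
  exact statement10_aux m hm hdim f B hB
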